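/- Let x = (xₙ) ∈ c₀(ℂ_p) satisfy x_k ≠ 0 for all k ≥ k₀ and max_{j≥1} |x_{k+j}|_p / |x_k|_p → 0 as k → ∞. Then x is a cyclic vector for the backward shift T, i.e., the closed linear span of {x, Tx, T²x, …} equals c₀. -/

import Mathlib

open Filter Topology ZeroAtInfty

/-- The backward shift `(x₀,x₁,…) ↦ (x₁,x₂,…)` on `c₀`. -/
noncomputable def bshiftC0 {K : Type*} [NormedField K] (x : C₀(ℕ, K)) : C₀(ℕ, K) where
  toFun := fun n => x (n + 1)
  continuous_toFun := continuous_of_discreteTopology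
  zero_at_infty' := by
    rw [cocompact_eq_atTop (α := ℕ)]
    refine (tendsto_add_atTop_iff_nat 1).mpr ?_
    have h := x.zero_at_infty'
    rw [cocompact_eq_atTop (α := ℕ)] at h
    exact h

/-- Standard basis vectors in `c₀`. -/
noncomputable def eC0 (K : Type*) [NormedField K] (i : ℕ) : C₀(ℕ, K) where
  toFun := fun n => if n = i then 1 else 0
  continuous_toFun := continuous_of_discreteTopology
  zero_at_infty' := by
    rw [cocompact_eq_atTop (α := ℕ)]
    apply tendsto_nhds_of_eventually_eq
    filter_upwards [eventually_gt_atTop i] with n hn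
    simp [hn.ne']

@[simp] lemma eC0_apply (K : Type*) [NormedField K] (i n : ℕ) :
    eC0 K i n = if n = i then 1 else 0 := rfl

lemma bshiftC0_iterate_apply {K : Type*} [NormedField K] (k : ℕ) (x : C₀(ℕ, K)) (m : ℕ) :
    (bshiftC0^[k] x) m = x (m + k) := by
  induction k generalizing x with
  | zero => simp
  | succ k ih =>
    rw [Function.iterate_succ_apply, ih]
    exact congrArg x (by omega)

lemma C0_norm_le {K : Type*} [NormedField K] (f : C₀(ℕ, K)) (C : ℝ) (hC : 0 ≤ C)
    (h : ∀ n, ‖f n‖ ≤ C) : ‖f‖ ≤ C := by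
  rw [← ZeroAtInftyContinuousMap.norm_toBCF_eq_norm]
  exact (BoundedContinuousFunction.norm_le hC).mpr h

lemma C0_norm_coe_le {K : Type*} [NormedField K] (f : C₀(ℕ, K)) (n : ℕ) : ‖f n‖ ≤ ‖f‖ := by
  rw [← ZeroAtInftyContinuousMap.norm_toBCF_eq_norm]
  exact f.toBCF.norm_coe_le_norm n

lemma C0_sum_apply {K : Type*} [NormedField K] {ι : Type*} (s : Finset ι)
    (f : ι → C₀(ℕ, K)) (m : ℕ) : (∑ i ∈ s, f i) m = ∑ i ∈ s, f i m := by
  induction s using Finset.cons_induction with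
  | empty => simp
  | cons i s hi ih => simp [Finset.sum_cons, ih]

/-- If `x = (xₙ) ∈ c₀` satisfies `x_k ≠ 0` for all `k ≥ k₀` and
`max_{j≥1} ‖x_{k+j}‖/‖x_k‖ → 0` as `k → ∞`, then `x` is a cyclic vector for the
backward shift `T`: the closed linear span of `{x, Tx, T²x, …}` is all of `c₀`. -/
theorem cyclic_vector_criterion
    (p : ℕ) [Fact p.Prime] (K : Type*) [NontriviallyNormedField K]
    [IsAlgClosed K] [CompleteSpace K] [IsUltrametricDist K] [Algebra ℚ_[p] K]
    (hK : ∀ q : ℚ_[p], ‖algebraMap ℚ_[p] K q‖ = ‖q‖)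
    (x : C₀(ℕ, K)) (k₀ : ℕ) (hx : ∀ k, k₀ ≤ k → x k ≠ 0)
    (hratio : Tendsto (fun k : ℕ => ⨆ j : ℕ, ‖x (k + 1 + j)‖ / ‖x k‖)
      atTop (𝓝 0)) :
    (Submodule.span K (Set.range fun n : ℕ => bshiftC0^[n] x)).topologicalClosure
      = ⊤ := by
  set S := (Submodule.span K (Set.range fun n : ℕ => bshiftC0^[n] x)).topologicalClosure with hS
  have hSclosed : IsClosed (S : Set C₀(ℕ, K)) := Submodule.isClosed_topologicalClosure _
  have hmem : ∀ k, bshiftC0^[k] x ∈ S := fun k =>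
    Submodule.le_topologicalClosure _ (Submodule.subset_span ⟨k, rfl⟩)
  -- All standard basis vectors lie in S
  have he : ∀ n, eC0 K n ∈ S := by
    intro n
    induction n using Nat.strong_induction_on with
    | _ n ih =>
      set z : ℕ → C₀(ℕ, K) := fun k =>
        (x (k + n))⁻¹ • bshiftC0^[k] x
          - ∑ i ∈ Finset.range n, (x (k + i) * (x (k + n))⁻¹) • eC0 K i with hz
      have hzmem : ∀ k, z k ∈ S := fun k =>
        Submodule.sub_mem _ (Submodule.smul_mem _ _ (hmem k))
          (Submodule.sum_mem _ fun i hi =>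
            Submodule.smul_mem _ _ (ih i (Finset.mem_range.mp hi)))
      have htend : Tendsto z atTop (𝓝 (eC0 K n)) := by
        rw [← tendsto_sub_nhds_zero_iff]
        apply squeeze_zero_norm' ?_ (hratio.comp (tendsto_add_atTop_nat n))
        filter_upwards [eventually_ge_atTop k₀] with k hk
        have hkn : x (k + n) ≠ 0 := hx _ (le_trans hk (Nat.le_add_right _ _))
        have hkn' : (0:ℝ) < ‖x (k + n)‖ := norm_pos_iff.mpr hkn
        have hsupnn : (0:ℝ) ≤ ⨆ j : ℕ, ‖x (k + n + 1 + j)‖ / ‖x (k + n)‖ :=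
          Real.iSup_nonneg fun j => div_nonneg (norm_nonneg _) (norm_nonneg _)
        have hbdd : BddAbove (Set.range fun j : ℕ => ‖x (k + n + 1 + j)‖ / ‖x (k + n)‖) := by
          refine ⟨‖x‖ / ‖x (k + n)‖, ?_⟩
          rintro r ⟨j, rfl⟩
          exact (div_le_div_iff_of_pos_right hkn').mpr (C0_norm_coe_le x _)
        show ‖z k - eC0 K n‖ ≤ (fun k : ℕ => ⨆ j : ℕ, ‖x (k + 1 + j)‖ / ‖x k‖) (k + n)
        apply C0_norm_le _ _ hsupnn
        intro m
        have hval : (z k - eC0 K n) m =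
            (x (k + n))⁻¹ * x (m + k)
              - (if m < n then x (k + m) * (x (k + n))⁻¹ else 0)
              - (if m = n then 1 else 0) := by
          simp only [hz, ZeroAtInftyContinuousMap.coe_sub, ZeroAtInftyContinuousMap.coe_smul,
            Pi.sub_apply, Pi.smul_apply, smul_eq_mul, bshiftC0_iterate_apply]
          congr 2
          rw [C0_sum_apply]
          simp only [ZeroAtInftyContinuousMap.coe_smul, Pi.smul_apply, eC0_apply, smul_eq_mul,
            mul_ite, mul_one, mul_zero]
          rw [Finset.sum_ite_eq (Finset.range n) m (fun i => x (k + i) * (x (k + n))⁻¹)]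
          simp [Finset.mem_range]
        rcases lt_trichotomy m n with hm | hm | hm
        · rw [hval, if_pos hm, if_neg hm.ne]
          have : m + k = k + m := by omega
          rw [this, mul_comm]
          simpa using hsupnn
        · subst hm
          rw [hval, if_neg (lt_irrefl m), if_pos rfl]
          have : m + k = k + m := by omega
          rw [this, inv_mul_cancel₀ hkn]
          simpa using hsupnn
        · rw [hval, if_neg (not_lt.mpr hm.le), if_neg hm.ne']
          have hm' : m + k = k + n + 1 + (m - n - 1) := by omega
          rw [sub_zero, sub_zero, hm', norm_mul, norm_inv, inv_mul_eq_div]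
          exact le_ciSup hbdd (m - n - 1)
      exact hSclosed.mem_of_tendsto htend (Eventually.of_forall hzmem)
  -- Conclude: every element of c₀ is in S
  rw [eq_top_iff]
  intro f _
  set g : ℕ → C₀(ℕ, K) := fun N => ∑ i ∈ Finset.range N, f i • eC0 K i with hg
  have hgmem : ∀ N, g N ∈ S := fun N =>
    Submodule.sum_mem _ fun i _ => Submodule.smul_mem _ _ (he i)
  have htend : Tendsto g atTop (𝓝 f) := by
    rw [Metric.tendsto_atTop]
    intro ε hε
    have hf := f.zero_at_infty'
    rw [cocompact_eq_atTop (α := ℕ)] at hf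
    obtain ⟨N₀, hN₀⟩ := Metric.tendsto_atTop.mp hf (ε/2) (half_pos hε)
    refine ⟨N₀, fun N hN => ?_⟩
    rw [dist_eq_norm]
    refine lt_of_le_of_lt (C0_norm_le _ (ε/2) (half_pos hε).le fun m => ?_) (half_lt_self hε)
    have hval : (g N - f) m = (if m < N then f m else 0) - f m := by
      simp only [hg, ZeroAtInftyContinuousMap.coe_sub, Pi.sub_apply]
      congr 1
      rw [C0_sum_apply]
      simp only [ZeroAtInftyContinuousMap.coe_smul, Pi.smul_apply, eC0_apply, smul_eq_mul,
        mul_ite, mul_one, mul_zero]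
      rw [Finset.sum_ite_eq (Finset.range N) m (fun i => f i)]
      simp [Finset.mem_range]
    by_cases hm : m < N
    · rw [hval, if_pos hm, sub_self]
      simpa using (half_pos hε).le
    · rw [hval, if_neg hm, zero_sub, norm_neg]
      have h1 : N₀ ≤ m := le_trans hN (not_lt.mp hm)
      have h2 := hN₀ m h1
      rw [dist_zero_right] at h2
      exact h2.le
  exact hSclosed.mem_of_tendsto htend (Eventually.of_forall hgmem)
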